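/- (Abstract rank-s update lemma.) Let Q be a real n×n matrix, P a real symmetric positive definite n×n matrix, and A = Q P. Let U, V be real n×s matrices and C an invertible real s×s matrix, and suppose C⁻¹ + Uᵀ P U is invertible; set Γ = (C⁻¹ + Uᵀ P U)⁻¹. Then P⁻¹ + U C Uᵀ is invertible and (Q + V C Uᵀ)(P⁻¹ + U C Uᵀ)⁻¹ = A + (V − A U) Γ Uᵀ P. -/

import Mathlib

open Matrix

/-- Abstract rank-s update lemma (core algebraic step of the windowed DMD update):
for `A = Q P` with `P` positive definite, `C` invertible and `C⁻¹ + Uᵀ P U`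
invertible, the matrix `P⁻¹ + U C Uᵀ` is invertible and
`(Q + V C Uᵀ)(P⁻¹ + U C Uᵀ)⁻¹ = A + (V − A U) Γ Uᵀ P` with `Γ = (C⁻¹ + Uᵀ P U)⁻¹`. -/
theorem windowed_dmd_abstract_update (n s : ℕ)
    (Q P : Matrix (Fin n) (Fin n) ℝ) (hP : P.PosDef)
    (U V : Matrix (Fin n) (Fin s) ℝ) (C : Matrix (Fin s) (Fin s) ℝ)
    (hC : IsUnit C) (hΓ : IsUnit (C⁻¹ + Uᵀ * P * U)) :
    IsUnit (P⁻¹ + U * C * Uᵀ) ∧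
    (Q + V * C * Uᵀ) * (P⁻¹ + U * C * Uᵀ)⁻¹ =
      Q * P + (V - (Q * P) * U) * (C⁻¹ + Uᵀ * P * U)⁻¹ * Uᵀ * P := by
  have hPd : IsUnit P.det := isUnit_iff_ne_zero.mpr hP.det_pos.ne'
  have hPu : IsUnit P := (Matrix.isUnit_iff_isUnit_det P).mpr hPd
  have hPinv : P⁻¹⁻¹ = P := Matrix.nonsing_inv_nonsing_inv P hPd
  have hPiu : IsUnit P⁻¹ := by
    refine (Matrix.isUnit_iff_isUnit_det _).mpr ?_
    rw [Matrix.det_nonsing_inv]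
    exact isUnit_ringInverse.mpr hPd
  have hAC : IsUnit (C⁻¹ + Uᵀ * P⁻¹⁻¹ * U) := by rwa [hPinv]
  -- Invertibility of P⁻¹ + U C Uᵀ
  have hUnit : IsUnit (P⁻¹ + U * C * Uᵀ) := by
    obtain ⟨iP⟩ := hPiu.nonempty_invertible
    obtain ⟨iC⟩ := hC.nonempty_invertible
    have hAC' : IsUnit (⅟C + Uᵀ * ⅟(P⁻¹) * U) := by
      rwa [Matrix.invOf_eq_nonsing_inv, Matrix.invOf_eq_nonsing_inv]
    obtain ⟨iAC⟩ := hAC'.nonempty_invertible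
    letI := Matrix.invertibleAddMulMul P⁻¹ U C Uᵀ
    exact isUnit_of_invertible _
  refine ⟨hUnit, ?_⟩
  set Γ : Matrix (Fin s) (Fin s) ℝ := (C⁻¹ + Uᵀ * P * U)⁻¹ with hΓdef
  -- Woodbury identity
  have hW : (P⁻¹ + U * C * Uᵀ)⁻¹ = P - P * U * Γ * Uᵀ * P := by
    rw [Matrix.add_mul_mul_inv_eq_sub _ _ _ _ hPiu hC hAC, hPinv, Matrix.mul_assoc]
  rw [hW]
  have hΓd : IsUnit (C⁻¹ + Uᵀ * P * U).det := (Matrix.isUnit_iff_isUnit_det _).mp hΓ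
  have h1 : (C⁻¹ + Uᵀ * P * U) * Γ = 1 := Matrix.mul_nonsing_inv _ hΓd
  have hCd : IsUnit C.det := (Matrix.isUnit_iff_isUnit_det C).mp hC
  have hCC : C * C⁻¹ = 1 := Matrix.mul_nonsing_inv _ hCd
  -- key identity: C * (UᵀP) - C * (UᵀPU) * (Γ * UᵀP) = Γ * UᵀP
  have h3 : C⁻¹ * Γ = 1 - Uᵀ * P * U * Γ := by
    rw [Matrix.add_mul] at h1
    exact eq_sub_of_add_eq h1
  have hkey : C * (Uᵀ * P) - C * (Uᵀ * P * U * Γ) * (Uᵀ * P) = Γ * (Uᵀ * P) := by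
    have h4 : C * (1 - Uᵀ * P * U * Γ) * (Uᵀ * P) = Γ * (Uᵀ * P) := by
      rw [← h3, ← Matrix.mul_assoc, ← Matrix.mul_assoc, hCC, Matrix.one_mul,
        Matrix.mul_assoc]
    rwa [Matrix.mul_sub, Matrix.mul_one, Matrix.sub_mul] at h4
  have hkeyV : V * (C * (Uᵀ * P)) - V * (C * (Uᵀ * P * U * Γ) * (Uᵀ * P))
      = V * (Γ * (Uᵀ * P)) := by
    rw [← Matrix.mul_sub, hkey]
  simp only [Matrix.mul_sub, Matrix.mul_add, Matrix.add_mul, Matrix.sub_mul,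
    Matrix.mul_assoc] at hkeyV ⊢
  rw [← hkeyV]
  abel
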